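/- Let K be a field with at least 3 elements and n ≥ 3 odd. The space of skew-symmetric n×n matrices over K is a maximal singular subspace of M_n(K): every matrix space properly containing it contains an invertible matrix. -/
import Mathlib

open Matrix

namespace Stmt7Aux

variable {K : Type*} [Field K]

/-- alternating predicate -/
def MAlt {m : ℕ} (N : Matrix (Fin m) (Fin m) K) : Prop :=
  Nᵀ = -N ∧ ∀ i, N i i = 0

/-- quadratic form of a matrix -/
def qf {m : ℕ} (B : Matrix (Fin m) (Fin m) K) (v : Fin m → K) : K :=
  v ⬝ᵥ B.mulVec v

lemma qf_transpose {m : ℕ} (B : Matrix (Fin m) (Fin m) K) (v : Fin m → K) :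
    qf Bᵀ v = qf B v := by
  unfold qf
  rw [Matrix.mulVec_transpose, dotProduct_comm, Matrix.dotProduct_mulVec]

lemma qf_single {m : ℕ} (B : Matrix (Fin m) (Fin m) K) (i : Fin m) :
    qf B (Pi.single i 1) = B i i := by
  simp [qf, Matrix.mulVec_single, single_dotProduct]

lemma alt_qf {m : ℕ} {N : Matrix (Fin m) (Fin m) K} (hN : MAlt N) (v : Fin m → K) :
    qf N v = 0 := by
  classical
  set U : Matrix (Fin m) (Fin m) K := Matrix.of fun i j => if i < j then N i j else 0 with hU
  have hNU : N = U - Uᵀ := by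
    ext i j
    rcases lt_trichotomy i j with h | h | h
    · simp [hU, h, not_lt_of_gt h]
    · subst h; simp [hU, lt_irrefl, hN.2 i]
    · have : N j i = -N i j := by
        have := congrFun (congrFun hN.1 i) j
        simpa [Matrix.transpose_apply] using this
      simp [hU, h, not_lt_of_gt h, this]
  rw [hNU]
  have : qf (U - Uᵀ) v = qf U v - qf Uᵀ v := by
    simp [qf, Matrix.sub_mulVec, dotProduct_sub]
  rw [this, qf_transpose, sub_self]

lemma exists_qf_ne {m : ℕ} {B : Matrix (Fin m) (Fin m) K} (hB : ¬ MAlt B) :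
    ∃ v, qf B v ≠ 0 := by
  by_contra h
  push_neg at h
  apply hB
  constructor
  · ext i j
    by_cases hij : i = j
    · subst hij
      have := h (Pi.single i 1); rw [qf_single] at this
      simp [Matrix.transpose_apply, this]
    · have hq := h (Pi.single i 1 + Pi.single j 1)
      have hexp : qf B (Pi.single i 1 + Pi.single j 1)
          = B i i + B i j + B j i + B j j := by
        simp [qf, Matrix.mulVec_add, dotProduct_add, Matrix.mulVec_single,
          single_dotProduct]
        try ring
      have hi := h (Pi.single i 1); rw [qf_single] at hi
      have hj := h (Pi.single j 1); rw [qf_single] at hj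
      rw [hexp, hi, hj] at hq
      have hij0 : B i j + B j i = 0 := by linear_combination hq
      simp only [Matrix.transpose_apply, Matrix.neg_apply]
      linear_combination hij0
  · intro i
    have := h (Pi.single i 1); rwa [qf_single] at this

lemma congr_apply {m : ℕ} (P B : Matrix (Fin m) (Fin m) K) (i j : Fin m) :
    (Pᵀ * B * P) i j = (fun k => P k i) ⬝ᵥ B.mulVec (fun k => P k j) := by
  rw [Matrix.mul_assoc, Matrix.mul_apply]
  simp [Matrix.mul_apply, Matrix.mulVec, dotProduct]

lemma congr_diag {m : ℕ} (P B : Matrix (Fin m) (Fin m) K) (i : Fin m) :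
    (Pᵀ * B * P) i i = qf B (fun k => P k i) := congr_apply P B i i

lemma alt_congr {m : ℕ} {N : Matrix (Fin m) (Fin m) K} (hN : MAlt N)
    (P : Matrix (Fin m) (Fin m) K) : MAlt (Pᵀ * N * P) := by
  constructor
  · rw [Matrix.transpose_mul, Matrix.transpose_mul, Matrix.transpose_transpose,
      Matrix.mul_assoc, ← Matrix.mul_assoc, hN.1, Matrix.mul_neg, Matrix.neg_mul,
      Matrix.mul_assoc]
  · intro i
    rw [congr_diag, alt_qf hN]

lemma alt_add {m : ℕ} {M N : Matrix (Fin m) (Fin m) K} (hM : MAlt M) (hN : MAlt N) :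
    MAlt (M + N) := by
  refine ⟨?_, fun i => by simp [hM.2 i, hN.2 i]⟩
  rw [Matrix.transpose_add, hM.1, hN.1, neg_add]

lemma alt_neg {m : ℕ} {N : Matrix (Fin m) (Fin m) K} (hN : MAlt N) : MAlt (-N) := by
  refine ⟨?_, fun i => by simp [hN.2 i]⟩
  rw [Matrix.transpose_neg, hN.1, neg_neg]

/-- goodness: can be made invertible by adding an alternating matrix -/
def Good {m : ℕ} (B : Matrix (Fin m) (Fin m) K) : Prop :=
  ∃ N : Matrix (Fin m) (Fin m) K, MAlt N ∧ IsUnit (B + N)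

lemma transfer_equiv {m : ℕ} (B : Matrix (Fin m) (Fin m) K) (e : Equiv.Perm (Fin m))
    (h : Good (B.submatrix e e)) : Good B := by
  obtain ⟨N, hN, hU⟩ := h
  refine ⟨N.submatrix e.symm e.symm, ⟨?_, fun i => hN.2 _⟩, ?_⟩
  · ext i j
    have := congrFun (congrFun hN.1 (e.symm i)) (e.symm j)
    simpa [Matrix.transpose_apply] using this
  · have : B + N.submatrix e.symm e.symm
        = (B.submatrix e e + N).submatrix e.symm e.symm := by
      ext i j; simp
    rw [this, Matrix.isUnit_iff_isUnit_det, Matrix.det_submatrix_equiv_self,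
      ← Matrix.isUnit_iff_isUnit_det]
    exact hU

lemma transfer_congr {m : ℕ} (B : Matrix (Fin m) (Fin m) K)
    {P : Matrix (Fin m) (Fin m) K} (hP : IsUnit P)
    (h : Good (Pᵀ * B * P)) : Good B := by
  obtain ⟨u, rfl⟩ := hP
  obtain ⟨N, hN, hU⟩ := h
  set P : Matrix (Fin m) (Fin m) K := (u : Matrix (Fin m) (Fin m) K)
  set Q : Matrix (Fin m) (Fin m) K := ((u⁻¹ : (Matrix (Fin m) (Fin m) K)ˣ) : Matrix (Fin m) (Fin m) K)
  have hPQ : P * Q = 1 := u.mul_inv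
  have hQP : Q * P = 1 := u.inv_mul
  refine ⟨Qᵀ * N * Q, alt_congr hN Q, ?_⟩
  have hexp : (B : Matrix (Fin m) (Fin m) K) + Qᵀ * N * Q
      = Qᵀ * (Pᵀ * B * P + N) * Q := by
    have h1 : Qᵀ * Pᵀ = 1 := by rw [← Matrix.transpose_mul, hPQ, Matrix.transpose_one]
    have hmain : Qᵀ * (Pᵀ * B * P + N) * Q
        = (Qᵀ * Pᵀ) * B * (P * Q) + Qᵀ * N * Q := by noncomm_ring
    rw [hmain, h1, hPQ, Matrix.one_mul, Matrix.mul_one]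
  rw [hexp]
  have hQu : IsUnit Q := u⁻¹.isUnit
  have hQtu : IsUnit (Qᵀ) := by
    rw [Matrix.isUnit_iff_isUnit_det, Matrix.det_transpose, ← Matrix.isUnit_iff_isUnit_det]
    exact hQu
  exact (hQtu.mul hU).mul hQu

lemma exists_quad (hK : (3 : Cardinal) ≤ Cardinal.mk K) {a : K} (ha : a ≠ 0) (l c : K) :
    ∃ s : K, a * s * s + l * s + c ≠ 0 := by
  have hex : ∃ t : K, t ≠ 0 ∧ t ≠ 1 := by
    by_contra h
    push_neg at h
    have huniv : (Set.univ : Set K) = {0, 1} := by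
      ext x
      simp only [Set.mem_univ, Set.mem_insert_iff, Set.mem_singleton_iff, true_iff]
      by_cases hx : x = 0
      · exact Or.inl hx
      · exact Or.inr (h x hx)
    have h2 : Cardinal.mk K ≤ 2 := by
      calc Cardinal.mk K = Cardinal.mk (Set.univ : Set K) := Cardinal.mk_univ.symm
        _ = Cardinal.mk ({0, 1} : Set K) := by rw [huniv]
        _ ≤ Cardinal.mk ({1} : Set K) + 1 := Cardinal.mk_insert_le
        _ = 2 := by rw [Cardinal.mk_singleton]; exact one_add_one_eq_two
    have h3 : ((3 : ℕ) : Cardinal.{u_1}) ≤ ((2 : ℕ) : Cardinal.{u_1}) := by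
      exact_mod_cast hK.trans h2
    have := Nat.cast_le.mp h3
    omega
  obtain ⟨t, ht0, ht1⟩ := hex
  by_contra h
  push_neg at h
  have h0 := h 0
  have h1 := h 1
  have ht := h t
  simp only [mul_zero, zero_mul, mul_one, add_zero, zero_add, mul_zero] at h0 h1 ht
  -- h0 : c = 0
  rw [h0] at h1 ht
  -- h1 : a + l = 0 ; ht : a*t*t + l*t = 0
  have hl : l = -a := by linear_combination h1
  rw [hl] at ht
  apply ht0
  have : a * t * (t - 1) = 0 := by ring_nf; linear_combination ht
  rcases mul_eq_zero.mp this with h' | h'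
  · rcases mul_eq_zero.mp h' with h'' | h''
    · exact absurd h'' ha
    · exact h''
  · exact absurd (by linear_combination h') ht1

lemma det_updateCol_one {m : ℕ} (k : Fin m) (v : Fin m → K) :
    ((1 : Matrix (Fin m) (Fin m) K).updateCol k v).det = v k := by
  rw [← Matrix.cramer_apply, Matrix.cramer_one]
  rfl

lemma alt_zero {m : ℕ} : MAlt (0 : Matrix (Fin m) (Fin m) K) :=
  ⟨by simp, fun _ => rfl⟩

lemma step (hK : (3 : Cardinal) ≤ Cardinal.mk K) {m' : ℕ}
    (C : Matrix (Fin (m' + 2)) (Fin (m' + 2)) K) (ha : C 0 0 ≠ 0)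
    (IH : ∀ B' : Matrix (Fin (m' + 1)) (Fin (m' + 1)) K,
      (Odd (m' + 1) → ¬ MAlt B') → Good B') : Good C := by
  classical
  have h01 : (0 : Fin (m' + 2)) ≠ 1 := by simp [Fin.ext_iff]
  obtain ⟨s, hs⟩ := exists_quad hK ha (C 0 1 + C 1 0) (C 1 1)
  set u : Fin (m' + 2) → K := Pi.single 0 s + Pi.single 1 1 with hu
  set Q : Matrix (Fin (m' + 2)) (Fin (m' + 2)) K :=
    (1 : Matrix (Fin (m' + 2)) (Fin (m' + 2)) K).updateCol 1 u with hQdef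
  have hQ : IsUnit Q := by
    rw [Matrix.isUnit_iff_isUnit_det, hQdef, det_updateCol_one]
    have : u 1 = 1 := by simp [hu, Pi.single_apply, Ne.symm h01]
    rw [this]; exact isUnit_one
  apply transfer_congr C hQ
  set D : Matrix (Fin (m' + 2)) (Fin (m' + 2)) K := Qᵀ * C * Q with hDdef
  have hcol0 : (fun r => Q r 0) = Pi.single 0 1 := by
    funext r
    rw [hQdef, Matrix.updateCol_ne h01]
    simp [Matrix.one_apply, Pi.single_apply]
  have hcol1 : (fun r => Q r 1) = u := by
    funext r; rw [hQdef]; exact Matrix.updateCol_self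
  have hD00 : D 0 0 = C 0 0 := by
    rw [hDdef, congr_diag, hcol0, qf_single]
  have hD11 : D 1 1 ≠ 0 := by
    rw [hDdef, congr_diag, hcol1]
    have hqu : qf C u = C 0 0 * s * s + (C 0 1 + C 1 0) * s + C 1 1 := by
      simp [qf, hu, Matrix.mulVec_add, dotProduct_add, Matrix.mulVec_single,
        single_dotProduct]
      try ring
    rw [hqu]; exact hs
  set N1 : Matrix (Fin (m' + 2)) (Fin (m' + 2)) K :=
    Matrix.of fun i j => if j = 0 ∧ i ≠ 0 then -D i 0
      else if i = 0 ∧ j ≠ 0 then D j 0 else 0 with hN1def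
  have hN1 : MAlt N1 := by
    constructor
    · ext i j
      by_cases hi : i = 0 <;> by_cases hj : j = 0 <;>
        simp [hN1def, Matrix.transpose_apply, hi, hj]
    · intro i
      by_cases hi : i = 0 <;> simp [hN1def, hi]
  set E : Matrix (Fin (m' + 2)) (Fin (m' + 2)) K := D + N1 with hEdef
  have hE0 : ∀ i : Fin (m' + 2), i ≠ 0 → E i 0 = 0 := by
    intro i hi; simp [hEdef, hN1def, hi]
  have hE00 : E 0 0 = D 0 0 := by simp [hEdef, hN1def]
  have hE11 : E 1 1 = D 1 1 := by simp [hEdef, hN1def, h01, Ne.symm h01]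
  set F : Matrix (Fin (m' + 1)) (Fin (m' + 1)) K :=
    E.submatrix Fin.succ Fin.succ with hFdef
  have hF00 : F 0 0 = E 1 1 := by simp [hFdef]
  have hFgood : Odd (m' + 1) → ¬ MAlt F := by
    intro _ hAltF
    have h0 := alt_qf hAltF (Pi.single 0 1)
    rw [qf_single, hF00, hE11] at h0
    exact hD11 h0
  obtain ⟨N', hN', hUF⟩ := IH F hFgood
  set N2 : Matrix (Fin (m' + 2)) (Fin (m' + 2)) K :=
    Matrix.of fun i j =>
      Fin.cases 0 (fun i' => Fin.cases 0 (fun j' => N' i' j') j) i with hN2def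
  have hN2succ : ∀ i' j', N2 i'.succ j'.succ = N' i' j' := by
    intro i' j'; simp [hN2def]
  have hN2z1 : ∀ j, N2 0 j = 0 := by intro j; simp [hN2def]
  have hN2z2 : ∀ i, N2 i 0 = 0 := by
    intro i
    induction i using Fin.cases with
    | zero => simp [hN2def]
    | succ i' => simp [hN2def]
  have hN2 : MAlt N2 := by
    constructor
    · ext i j
      simp only [Matrix.transpose_apply, Matrix.neg_apply]
      induction i using Fin.cases with
      | zero =>
        induction j using Fin.cases with
        | zero => simp [hN2def]
        | succ j' => simp [hN2def]
      | succ i' =>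
        induction j using Fin.cases with
        | zero => simp [hN2def]
        | succ j' =>
          rw [hN2succ, hN2succ]
          have := congrFun (congrFun hN'.1 i') j'
          simpa [Matrix.transpose_apply] using this
    · intro i
      induction i using Fin.cases with
      | zero => exact hN2z1 0
      | succ i' => rw [hN2succ]; exact hN'.2 i'
  refine ⟨N1 + N2, alt_add hN1 hN2, ?_⟩
  have hMsum : D + (N1 + N2) = E + N2 := by rw [hEdef, add_assoc]
  rw [hMsum]
  set M : Matrix (Fin (m' + 2)) (Fin (m' + 2)) K := E + N2 with hMdef
  have hM0 : ∀ i : Fin (m' + 2), i ≠ 0 → M i 0 = 0 := by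
    intro i hi; simp [hMdef, hE0 i hi, hN2z2]
  have hM00 : M 0 0 = E 0 0 := by simp [hMdef, hN2z2]
  have hMsub : M.submatrix Fin.succ Fin.succ = F + N' := by
    ext i j; simp [hMdef, hFdef, hN2succ]
  rw [Matrix.isUnit_iff_isUnit_det]
  have hdet : M.det = M 0 0 * (F + N').det := by
    rw [Matrix.det_succ_column_zero]
    rw [Finset.sum_eq_single 0]
    · rw [Fin.succAbove_zero, hMsub]
      simp
    · intro i _ hi
      rw [hM0 i hi]; ring
    · intro h; exact absurd (Finset.mem_univ 0) h
  rw [hdet]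
  refine IsUnit.mul ?_ ?_
  · rw [hM00, hE00, hD00]; exact isUnit_iff_ne_zero.mpr ha
  · rw [← Matrix.isUnit_iff_isUnit_det]; exact hUF

lemma key (hK : (3 : Cardinal) ≤ Cardinal.mk K) :
    ∀ m : ℕ, ∀ B : Matrix (Fin m) (Fin m) K, (Odd m → ¬ MAlt B) → Good B := by
  intro m
  induction m using Nat.strong_induction_on with
  | _ m IH =>
    match m, IH with
    | 0, _ =>
      intro B _
      refine ⟨0, alt_zero, ?_⟩
      rw [add_zero, Matrix.isUnit_iff_isUnit_det, Matrix.det_isEmpty]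
      exact isUnit_one
    | 1, _ =>
      intro B hB
      have hBna := hB odd_one
      by_cases hz : B 0 0 = 0
      · exfalso
        apply hBna
        have hB0 : B = 0 := by
          ext i j
          rw [Subsingleton.elim i 0, Subsingleton.elim j 0]
          exact hz
        rw [hB0]; exact alt_zero
      · refine ⟨0, alt_zero, ?_⟩
        rw [add_zero, Matrix.isUnit_iff_isUnit_det, Matrix.det_fin_one]
        exact isUnit_iff_ne_zero.mpr hz
    | (m' + 2), IH =>
      intro B hB
      by_cases hAlt : MAlt B
      · have hEven : Even (m' + 2) := by
          rcases Nat.even_or_odd (m' + 2) with he | ho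
          · exact he
          · exact absurd hAlt (hB ho)
        obtain ⟨k, hk⟩ := hEven
        let e : Fin k ⊕ Fin k ≃ Fin (m' + 2) := finSumFinEquiv.trans (finCongr hk.symm)
        set Jm : Matrix (Fin (m' + 2)) (Fin (m' + 2)) K :=
          (Matrix.J (Fin k) K).submatrix e.symm e.symm with hJm
        have hJmAlt : MAlt Jm := by
          constructor
          · ext i j
            rw [hJm]
            simp only [Matrix.transpose_apply, Matrix.submatrix_apply, Matrix.neg_apply]
            have := congrFun (congrFun (Matrix.J_transpose (Fin k) K) (e.symm i)) (e.symm j)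
            simpa [Matrix.transpose_apply] using this
          · intro i
            rw [hJm, Matrix.submatrix_apply]
            rcases e.symm i with a | a <;> simp [Matrix.J]
        refine ⟨-B + Jm, alt_add (alt_neg hAlt) hJmAlt, ?_⟩
        have hBJ : B + (-B + Jm) = Jm := by abel
        rw [hBJ, Matrix.isUnit_iff_isUnit_det, hJm, Matrix.det_submatrix_equiv_self]
        exact Matrix.isUnit_det_J (Fin k) K
      · obtain ⟨v, hv⟩ := exists_qf_ne hAlt
        obtain ⟨k, hk⟩ : ∃ k, v k ≠ 0 := by
          by_contra h
          push_neg at h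
          apply hv
          have hv0 : v = 0 := funext fun i => h i
          rw [hv0]
          simp [qf]
        set P1 : Matrix (Fin (m' + 2)) (Fin (m' + 2)) K :=
          (1 : Matrix (Fin (m' + 2)) (Fin (m' + 2)) K).updateCol k v with hP1def
        have hP1 : IsUnit P1 := by
          rw [Matrix.isUnit_iff_isUnit_det, hP1def, det_updateCol_one]
          exact isUnit_iff_ne_zero.mpr hk
        apply transfer_congr B hP1
        apply transfer_equiv _ (Equiv.swap (0 : Fin (m' + 2)) k)
        apply step hK
        · rw [Matrix.submatrix_apply, Equiv.swap_apply_left, congr_diag]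
          have hcol : (fun r => P1 r k) = v := by
            funext r; rw [hP1def]; exact Matrix.updateCol_self
          rw [hcol]
          exact hv
        · intro B' hB'
          exact IH (m' + 1) (by omega) B' hB'

end Stmt7Aux

/-- For `|K| ≥ 3` and odd `n ≥ 3`, the space of skew-symmetric `n × n` matrices
is a maximal singular subspace: any strictly larger matrix space contains an
invertible matrix. -/
theorem stmt7 {K : Type*} [Field K] (hK : (3 : Cardinal) ≤ Cardinal.mk K)
    {n : ℕ} (hn : 3 ≤ n) (hodd : Odd n)
    (S : Submodule K (Matrix (Fin n) (Fin n) K))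
    (hS : ∀ A : Matrix (Fin n) (Fin n) K,
      A ∈ S ↔ (A.transpose = -A ∧ ∀ i, A i i = 0))
    (B : Submodule K (Matrix (Fin n) (Fin n) K)) (hSB : S < B) :
    ∃ M ∈ B, IsUnit M := by
  obtain ⟨A, hAB, hAS⟩ := SetLike.exists_of_lt hSB
  have hAna : ¬ Stmt7Aux.MAlt A := fun h => hAS ((hS A).mpr h)
  obtain ⟨N, hN, hU⟩ := Stmt7Aux.key hK n A (fun _ => hAna)
  have hNS : N ∈ S := (hS N).mpr hN
  exact ⟨A + N, B.add_mem hAB (le_of_lt hSB hNS), hU⟩
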